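/- Every coloring of the edges of the complete tripartite graph K_11^3 (three parts, each of size 11) with 4 colors contains a monochromatic cycle C_4; equivalently, r_3(C_4,4) ≤ 11. -/

import Mathlib

/-- The complete multipartite graph with `p` parts, each of size `n`:
vertices are pairs `(part, index)`, adjacent iff they lie in different parts. -/
def completeMultipartite (p n : ℕ) : SimpleGraph (Fin p × Fin n) where
  Adj v w := v.1 ≠ w.1
  symm := ⟨fun _ _ h => h.symm⟩
  loopless := ⟨fun _ h => h rfl⟩

instance (p n : ℕ) : DecidableRel (completeMultipartite p n).Adj :=
  fun v w => inferInstanceAs (Decidable (v.1 ≠ w.1))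

/-- The edge coloring `c` contains a monochromatic cycle `C₄` in the graph `G`. -/
def HasMonoC4 {V : Type*} (G : SimpleGraph V) {k : ℕ} (c : Sym2 V → Fin k) : Prop :=
  ∃ v₁ v₂ v₃ v₄ : V,
    v₁ ≠ v₂ ∧ v₁ ≠ v₃ ∧ v₁ ≠ v₄ ∧ v₂ ≠ v₃ ∧ v₂ ≠ v₄ ∧ v₃ ≠ v₄ ∧
    G.Adj v₁ v₂ ∧ G.Adj v₂ v₃ ∧ G.Adj v₃ v₄ ∧ G.Adj v₄ v₁ ∧
    c s(v₁, v₂) = c s(v₂, v₃) ∧ c s(v₂, v₃) = c s(v₃, v₄) ∧ c s(v₃, v₄) = c s(v₄, v₁)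

/-- The `p`-partite Ramsey number `r_p(C₄, k)`: the least positive `n` such that every
`k`-coloring of the edges of `K_n^p` contains a monochromatic `C₄`. -/
noncomputable def multipartiteRamsey (p k : ℕ) : ℕ :=
  sInf {n : ℕ | 0 < n ∧
    ∀ c : Sym2 (Fin p × Fin n) → Fin k, HasMonoC4 (completeMultipartite p n) c}

namespace TRaux

abbrev V := Fin 3 × Fin 11

variable (c : Sym2 V → Fin 4)

/-- number of `i` in part `P` such that the edge from `u` to `(P,i)` has color `k` -/
def deg (u : V) (P : Fin 3) (k : Fin 4) : ℕ :=
  (Finset.univ.filter (fun i : Fin 11 => c s(u, (P, i)) = k)).card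

/-- indicator that `(u,(P,i)),(u,(P,j))` is a monochromatic cherry of color `k` -/
def ind (u : V) (P : Fin 3) (k : Fin 4) (i j : Fin 11) : ℕ :=
  if i ≠ j ∧ c s(u, (P, i)) = k ∧ c s(u, (P, j)) = k then 1 else 0

def g (u : V) (P : Fin 3) (k : Fin 4) (i j : Fin 11) : ℕ :=
  if u.1 ≠ P then ind c u P k i j else 0

lemma sum_deg (u : V) (P : Fin 3) : ∑ k : Fin 4, deg c u P k = 11 := by
  have := (Finset.card_eq_sum_card_fiberwise
    (f := fun i : Fin 11 => c s(u, (P, i))) (s := Finset.univ) (t := Finset.univ)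
    (fun x _ => Finset.mem_univ _))
  simpa [deg] using this.symm

lemma pair_sum (u : V) (P : Fin 3) (k : Fin 4) :
    ∑ i : Fin 11, ∑ j : Fin 11, ind c u P k i j = deg c u P k * (deg c u P k - 1) := by
  classical
  set D : Finset (Fin 11) := Finset.univ.filter (fun i => c s(u, (P, i)) = k) with hD
  have inner : ∀ i : Fin 11,
      (∑ j : Fin 11, ind c u P k i j) = if i ∈ D then D.card - 1 else 0 := by
    intro i
    by_cases hi : i ∈ D
    · have hci : c s(u, (P, i)) = k := by simpa [hD] using hi
      rw [if_pos hi]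
      have : (∑ j : Fin 11, ind c u P k i j)
          = (Finset.univ.filter (fun j : Fin 11 => i ≠ j ∧ c s(u, (P, i)) = k ∧
              c s(u, (P, j)) = k)).card := by
        rw [Finset.card_filter]
        simp only [ind]
      rw [this]
      have hset : (Finset.univ.filter (fun j : Fin 11 => i ≠ j ∧ c s(u, (P, i)) = k ∧
          c s(u, (P, j)) = k)) = D.erase i := by
        ext j
        simp only [hD, Finset.mem_filter, Finset.mem_univ, true_and, Finset.mem_erase]
        exact ⟨fun ⟨h1, _, h3⟩ => ⟨fun e => h1 e.symm, h3⟩,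
          fun ⟨h1, h2⟩ => ⟨fun e => h1 e.symm, hci, h2⟩⟩
      rw [hset, Finset.card_erase_of_mem hi]
    · have hci : ¬ c s(u, (P, i)) = k := by simpa [hD] using hi
      rw [if_neg hi]
      simp [ind, hci]
  rw [Finset.sum_congr rfl (fun i _ => inner i)]
  rw [Finset.sum_ite_mem, Finset.univ_inter, Finset.sum_const, smul_eq_mul]
  rfl

lemma quad_aux : ∀ a b c d : Fin 12, (a.1 + b.1 + c.1 + d.1 = 11) →
    20 ≤ a.1 * (a.1-1) + b.1 * (b.1-1) + c.1 * (c.1-1) + d.1 * (d.1-1) ∧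
    (a.1 * (a.1-1) + b.1 * (b.1-1) + c.1 * (c.1-1) + d.1 * (d.1-1) = 20 →
      a.1 = 2 ∨ a.1 = 3) := by decide

lemma quad (a b c d : ℕ) (h : a + b + c + d = 11) :
    20 ≤ a * (a-1) + b * (b-1) + c * (c-1) + d * (d-1) ∧
    (a * (a-1) + b * (b-1) + c * (c-1) + d * (d-1) = 20 → a = 2 ∨ a = 3) :=
  quad_aux ⟨a, by omega⟩ ⟨b, by omega⟩ ⟨c, by omega⟩ ⟨d, by omega⟩ h

/-- the inner color sum for a vertex and a part -/
def q (u : V) (P : Fin 3) : ℕ := ∑ k : Fin 4, deg c u P k * (deg c u P k - 1)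

lemma q_lb (u : V) (P : Fin 3) : 20 ≤ q c u P := by
  have h := sum_deg c u P
  rw [Fin.sum_univ_four] at h
  have := (quad _ _ _ _ h).1
  simpa [q, Fin.sum_univ_four] using this

lemma q_eq_deg0 (u : V) (P : Fin 3) (h : q c u P = 20) :
    deg c u P 0 = 2 ∨ deg c u P 0 = 3 := by
  have h1 := sum_deg c u P
  rw [Fin.sum_univ_four] at h1
  rw [q, Fin.sum_univ_four] at h
  exact (quad _ _ _ _ h1).2 h

lemma cher_card_le (h : ¬ HasMonoC4 (completeMultipartite 3 11) c)
    (P : Fin 3) (k : Fin 4) (i j : Fin 11) (hij : i ≠ j) :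
    (Finset.univ.filter (fun u : V => u.1 ≠ P ∧ c s(u, (P, i)) = k ∧
      c s(u, (P, j)) = k)).card ≤ 1 := by
  by_contra hcard
  push_neg at hcard
  obtain ⟨u₁, hu₁, u₂, hu₂, hne⟩ := Finset.one_lt_card.mp hcard
  simp only [Finset.mem_filter, Finset.mem_univ, true_and] at hu₁ hu₂
  apply h
  refine ⟨(P, i), u₁, (P, j), u₂, ?_, ?_, ?_, ?_, ?_, ?_, ?_, ?_, ?_, ?_, ?_, ?_, ?_⟩
  · exact fun hh => hu₁.1 (congrArg Prod.fst hh).symm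
  · exact fun hh => hij (congrArg Prod.snd hh)
  · exact fun hh => hu₂.1 (congrArg Prod.fst hh).symm
  · exact fun hh => hu₁.1 (congrArg Prod.fst hh)
  · exact hne
  · exact fun hh => hu₂.1 (congrArg Prod.fst hh).symm
  · exact fun hh => hu₁.1 hh.symm
  · exact hu₁.1
  · exact fun hh => hu₂.1 hh.symm
  · exact hu₂.1
  · have a1 : c s((P,i), u₁) = k := by rw [Sym2.eq_swap]; exact hu₁.2.1
    rw [a1, hu₁.2.2]
  · have a3 : c s((P,j), u₂) = k := by rw [Sym2.eq_swap]; exact hu₂.2.2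
    rw [a3, hu₁.2.2]
  · have a3 : c s((P,j), u₂) = k := by rw [Sym2.eq_swap]; exact hu₂.2.2
    rw [a3, hu₂.2.1]

lemma sum_g_card (P : Fin 3) (k : Fin 4) (i j : Fin 11) :
    ∑ u : V, g c u P k i j =
      if i ≠ j then (Finset.univ.filter (fun u : V => u.1 ≠ P ∧ c s(u, (P, i)) = k ∧
        c s(u, (P, j)) = k)).card else 0 := by
  by_cases hij : i ≠ j
  · rw [if_pos hij, Finset.card_filter]
    apply Finset.sum_congr rfl
    intro u _
    simp only [g, ind]
    by_cases h1 : u.1 ≠ P <;> by_cases h2 : c s(u,(P,i)) = k ∧ c s(u,(P,j)) = k <;>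
      simp [h1, h2, hij]
  · rw [if_neg hij]
    push_neg at hij
    simp [g, ind, hij]

lemma sum_g_le (h : ¬ HasMonoC4 (completeMultipartite 3 11) c)
    (P : Fin 3) (k : Fin 4) (i j : Fin 11) :
    ∑ u : V, g c u P k i j ≤ if i = j then 0 else 1 := by
  rw [sum_g_card]
  by_cases hij : i = j
  · simp [hij]
  · simp only [hij, if_neg, Ne, not_false_iff, if_true]
    simpa [hij] using cher_card_le c h P k i j hij

/-- column sum: number of monochromatic cherries of color `k` centered anywhere,
with endpoints `(P,i)`, `(P,j)` -/
def t (P : Fin 3) (k : Fin 4) (i j : Fin 11) : ℕ := ∑ u : V, g c u P k i j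

def bnd (i j : Fin 11) : ℕ := if i = j then 0 else 1

lemma t_le (h : ¬ HasMonoC4 (completeMultipartite 3 11) c)
    (P : Fin 3) (k : Fin 4) (i j : Fin 11) : t c P k i j ≤ bnd i j :=
  sum_g_le c h P k i j

lemma bnd_total :
    ∑ P : Fin 3, ∑ k : Fin 4, ∑ i : Fin 11, ∑ j : Fin 11, bnd i j = 1320 := by decide

lemma bnd_total2 : ∑ i : Fin 11, ∑ j : Fin 11, bnd i j = 110 := by decide

lemma g_inner_k (u : V) (P : Fin 3) (k : Fin 4) :
    ∑ i : Fin 11, ∑ j : Fin 11, g c u P k i j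
      = if u.1 ≠ P then deg c u P k * (deg c u P k - 1) else 0 := by
  by_cases hP : u.1 ≠ P
  · rw [if_pos hP, ← pair_sum c u P k]
    refine Finset.sum_congr rfl fun i _ => Finset.sum_congr rfl fun j _ => ?_
    simp [g, hP]
  · rw [if_neg hP]
    simp [g, hP]

lemma g_inner (u : V) (P : Fin 3) :
    ∑ k : Fin 4, ∑ i : Fin 11, ∑ j : Fin 11, g c u P k i j
      = if u.1 ≠ P then q c u P else 0 := by
  rw [show (∑ k : Fin 4, ∑ i : Fin 11, ∑ j : Fin 11, g c u P k i j)
      = ∑ k : Fin 4, if u.1 ≠ P then deg c u P k * (deg c u P k - 1) else 0 from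
    Finset.sum_congr rfl fun k _ => g_inner_k c u P k]
  by_cases hP : u.1 ≠ P <;> simp [hP, q]

/-- per-vertex contribution -/
def F (u : V) : ℕ := ∑ P : Fin 3, if u.1 ≠ P then q c u P else 0

lemma F_lb (u : V) : 40 ≤ F c u := by
  have h0 := q_lb c u 0
  have h1 := q_lb c u 1
  have h2 := q_lb c u 2
  have hu : u.1 = 0 ∨ u.1 = 1 ∨ u.1 = 2 := by omega
  rcases hu with hu | hu | hu <;>
    simp [F, Fin.sum_univ_three, hu, Fin.ext_iff] <;> omega

lemma swap_sum :
    ∑ u : V, ∑ P : Fin 3, ∑ k : Fin 4, ∑ i : Fin 11, ∑ j : Fin 11, g c u P k i j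
      = ∑ P : Fin 3, ∑ k : Fin 4, ∑ i : Fin 11, ∑ j : Fin 11, t c P k i j := by
  rw [Finset.sum_comm]
  refine Finset.sum_congr rfl fun P _ => ?_
  rw [Finset.sum_comm]
  refine Finset.sum_congr rfl fun k _ => ?_
  rw [Finset.sum_comm]
  refine Finset.sum_congr rfl fun i _ => ?_
  rw [Finset.sum_comm]
  rfl

set_option maxHeartbeats 1000000 in
lemma key (h : ¬ HasMonoC4 (completeMultipartite 3 11) c) : False := by
  classical
  -- the big sum, counted by vertices
  have hSF : ∑ u : V, ∑ P : Fin 3, ∑ k : Fin 4, ∑ i : Fin 11, ∑ j : Fin 11, g c u P k i j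
      = ∑ u : V, F c u :=
    Finset.sum_congr rfl fun u _ => Finset.sum_congr rfl fun P _ => g_inner c u P
  -- upper bound side
  have hle3 : ∀ P : Fin 3, (∑ k : Fin 4, ∑ i : Fin 11, ∑ j : Fin 11, t c P k i j)
      ≤ ∑ k : Fin 4, ∑ i : Fin 11, ∑ j : Fin 11, bnd i j :=
    fun P => Finset.sum_le_sum fun k _ => Finset.sum_le_sum fun i _ =>
      Finset.sum_le_sum fun j _ => t_le c h P k i j
  have hub : ∑ P : Fin 3, ∑ k : Fin 4, ∑ i : Fin 11, ∑ j : Fin 11, t c P k i j ≤ 1320 := by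
    rw [← bnd_total]
    exact Finset.sum_le_sum fun P _ => hle3 P
  -- lower bound side
  have hlb : 1320 ≤ ∑ u : V, F c u := by
    calc (1320 : ℕ) = ∑ _u : V, 40 := by simp
    _ ≤ ∑ u : V, F c u := Finset.sum_le_sum fun u _ => F_lb c u
  -- hence everything is tight
  have hS : ∑ u : V, F c u = 1320 := le_antisymm (by rw [← hSF, swap_sum]; exact hub) hlb
  have hSt : ∑ P : Fin 3, ∑ k : Fin 4, ∑ i : Fin 11, ∑ j : Fin 11, t c P k i j = 1320 := by
    rw [← swap_sum, hSF]; exact hS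
  -- (β) : every vertex has F = 40, hence q u P = 20 for all P ≠ u.1
  have hF40 : ∀ u : V, F c u = 40 := by
    have := (Finset.sum_eq_sum_iff_of_le (s := (Finset.univ : Finset V))
      (f := fun _ => (40 : ℕ)) (g := F c) (fun u _ => F_lb c u)).mp
    have h40 : ∑ _u : V, (40 : ℕ) = ∑ u : V, F c u := by
      rw [hS]; simp
    intro u
    exact ((this h40) u (Finset.mem_univ u)).symm
  have hq20 : ∀ u : V, u.1 ≠ 0 → q c u 0 = 20 := by
    intro u hu
    have h0 := q_lb c u 0
    have h1 := q_lb c u 1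
    have h2 := q_lb c u 2
    have hF := hF40 u
    have hu' : u.1 = 1 ∨ u.1 = 2 := by omega
    rcases hu' with hu' | hu' <;>
      simp [F, Fin.sum_univ_three, hu', Fin.ext_iff] at hF <;> omega
  -- (α) : extract t c 0 0 i j = bnd i j
  have e3 : ∑ k : Fin 4, ∑ i : Fin 11, ∑ j : Fin 11, t c 0 k i j
      = ∑ k : Fin 4, ∑ i : Fin 11, ∑ j : Fin 11, bnd i j := by
    have := (Finset.sum_eq_sum_iff_of_le (s := (Finset.univ : Finset (Fin 3)))
      (fun P _ => hle3 P)).mp (by rw [hSt, bnd_total])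
    exact this 0 (Finset.mem_univ 0)
  have e2 : ∑ i : Fin 11, ∑ j : Fin 11, t c 0 0 i j = 110 := by
    have hle2 : ∀ k : Fin 4, (∑ i : Fin 11, ∑ j : Fin 11, t c 0 k i j)
        ≤ ∑ i : Fin 11, ∑ j : Fin 11, bnd i j :=
      fun k => Finset.sum_le_sum fun i _ => Finset.sum_le_sum fun j _ => t_le c h 0 k i j
    have := (Finset.sum_eq_sum_iff_of_le (s := (Finset.univ : Finset (Fin 4)))
      (fun k _ => hle2 k)).mp e3
    rw [this 0 (Finset.mem_univ 0), bnd_total2]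
  -- rewrite e2 by vertices
  have e2' : ∑ u : V, (if u.1 ≠ 0 then deg c u 0 0 * (deg c u 0 0 - 1) else 0) = 110 := by
    calc ∑ u : V, (if u.1 ≠ 0 then deg c u 0 0 * (deg c u 0 0 - 1) else 0)
        = ∑ u : V, ∑ i : Fin 11, ∑ j : Fin 11, g c u 0 0 i j :=
          (Finset.sum_congr rfl fun u _ => g_inner_k c u 0 0).symm
      _ = ∑ i : Fin 11, ∑ u : V, ∑ j : Fin 11, g c u 0 0 i j := Finset.sum_comm ..
      _ = ∑ i : Fin 11, ∑ j : Fin 11, ∑ u : V, g c u 0 0 i j :=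
          Finset.sum_congr rfl fun i _ => Finset.sum_comm ..
      _ = ∑ i : Fin 11, ∑ j : Fin 11, t c 0 0 i j := rfl
      _ = 110 := e2
  -- parity contradiction
  have hdd : ∀ u : V, u.1 ≠ 0 → (deg c u 0 0 * (deg c u 0 0 - 1)) % 4 = 2 := by
    intro u hu
    rcases q_eq_deg0 c u 0 (hq20 u hu) with hd | hd <;> rw [hd]
  rw [Finset.sum_ite, Finset.sum_const_zero, add_zero] at e2'
  have hcard : (Finset.univ.filter (fun u : V => u.1 ≠ 0)).card = 22 := by decide
  have hx : (∑ u ∈ Finset.univ.filter (fun u : V => u.1 ≠ 0),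
      deg c u 0 0 * (deg c u 0 0 - 1)) % 4 = 0 := by
    rw [Finset.sum_nat_mod]
    rw [Finset.sum_congr rfl (fun u hu => hdd u (Finset.mem_filter.mp hu).2)]
    rw [Finset.sum_const, smul_eq_mul, hcard]
  rw [e2'] at hx
  norm_num at hx

end TRaux

/-- Every 4-coloring of the edges of `K_11^3` contains a monochromatic `C₄`;
equivalently, `r₃(C₄, 4) ≤ 11`. -/
theorem tripartiteRamsey_four_colors_le :
    (∀ c : Sym2 (Fin 3 × Fin 11) → Fin 4, HasMonoC4 (completeMultipartite 3 11) c) ∧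
      multipartiteRamsey 3 4 ≤ 11 := by
  have hall : ∀ c : Sym2 (Fin 3 × Fin 11) → Fin 4,
      HasMonoC4 (completeMultipartite 3 11) c := by
    intro c
    by_contra h
    exact TRaux.key c h
  exact ⟨hall, Nat.sInf_le ⟨by norm_num, hall⟩⟩
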